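/- Let E be a finite directed graph and Ω_E = (⋃_{N≥0} E^N_{sinks}) ∪ E^∞ the path space, where E^N_{sinks} is the set of paths of length N ending at a sink and E^∞ the set of infinite paths, equipped with the product (cylinder) topology generated by the sets U_ν = {νμ ∈ Ω_E} for finite paths ν. Define μ ~ ν iff μ, ν are both infinite and eventually equal (μ_N μ_{N+1}… = ν_N ν_{N+1}… for some N), or both are finite paths of the same length N ending at sinks with r(μ_N) = r(ν_N). Then the quotient map q : Ω_E → Ω_E/~ is open, and the sets U_{v,n} := {[μ] : ∃ path η of some length k with s(η) = v and r(η) = μ_{n+k}} form a basis for the quotient topology. -/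

import Mathlib

/-- A finite directed graph `E = (E⁰, E¹, r, s)`. -/
structure FinGraph where
  V : Type
  E : Type
  [fV : Fintype V]
  [fE : Fintype E]
  [dV : DecidableEq V]
  [dE : DecidableEq E]
  s : E → V
  r : E → V

attribute [instance] FinGraph.fV FinGraph.fE FinGraph.dV FinGraph.dE

/-- A path of length `n` in the graph `G`: `n+1` vertices joined by `n` consecutive edges. -/
structure GPath (G : FinGraph) (n : ℕ) where
  vert : Fin (n + 1) → G.V
  edge : Fin n → G.E
  src_eq : ∀ i : Fin n, G.s (edge i) = vert i.castSucc
  rng_eq : ∀ i : Fin n, G.r (edge i) = vert i.succ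

namespace GPath
variable {G : FinGraph} {n : ℕ}

/-- The source (initial vertex) of a path. -/
def src (p : GPath G n) : G.V := p.vert 0

/-- The range (final vertex) of a path. -/
def rng (p : GPath G n) : G.V := p.vert (Fin.last n)

end GPath

/-- An infinite path in `G`. -/
structure InfPath (G : FinGraph) where
  vert : ℕ → G.V
  edge : ℕ → G.E
  src_eq : ∀ i : ℕ, G.s (edge i) = vert i
  rng_eq : ∀ i : ℕ, G.r (edge i) = vert (i + 1)

/-- A sink: a vertex emitting no edge. -/
def IsSink (G : FinGraph) (v : G.V) : Prop := ∀ e : G.E, G.s e ≠ v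

/-- The path space `Ω_E`: finite paths ending at sinks together with infinite paths. -/
def Omega (G : FinGraph) : Type :=
  (Σ n : ℕ, {p : GPath G n // IsSink G (GPath.rng p)}) ⊕ InfPath G

/-- `ω` extends the finite path `ν` (i.e. `ω` belongs to the cylinder `U_ν`). -/
def ExtendsPath {G : FinGraph} {n : ℕ} (ν : GPath G n) : Omega G → Prop
  | .inl ⟨N, p⟩ => ∃ h : n ≤ N,
      (∀ i : Fin (n + 1), p.1.vert (Fin.castLE (Nat.succ_le_succ h) i) = ν.vert i) ∧
      (∀ i : Fin n, p.1.edge (Fin.castLE h i) = ν.edge i)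
  | .inr q => (∀ i : Fin (n + 1), q.vert i = ν.vert i) ∧
      (∀ i : Fin n, q.edge i = ν.edge i)

/-- The cylinder-set (product) topology on `Ω_E`. -/
instance (G : FinGraph) : TopologicalSpace (Omega G) :=
  TopologicalSpace.generateFrom
    {U | ∃ (n : ℕ) (ν : GPath G n), U = {ω : Omega G | ExtendsPath ν ω}}

/-- Tail equivalence on `Ω_E`: infinite paths eventually equal; finite sink-paths of the
same length with the same range. -/
def OmegaRel (G : FinGraph) : Omega G → Omega G → Prop
  | .inl ⟨N, p⟩, .inl ⟨M, q⟩ => N = M ∧ GPath.rng p.1 = GPath.rng q.1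
  | .inr p, .inr q => ∃ N : ℕ, ∀ k : ℕ, N ≤ k → p.edge k = q.edge k
  | _, _ => False

/-- The quotient `Ω_E/∼`. -/
def OmegaQuot (G : FinGraph) : Type := Quot (OmegaRel G)

/-- The quotient topology on `Ω_E/∼`. -/
instance (G : FinGraph) : TopologicalSpace (OmegaQuot G) :=
  TopologicalSpace.coinduced (Quot.mk (OmegaRel G)) inferInstance

/-- The `m`-th vertex of a (possibly finite) path, if defined. -/
def vertAt {G : FinGraph} : Omega G → ℕ → Option G.V
  | .inl ⟨N, p⟩, m => if h : m ≤ N then some (p.1.vert ⟨m, Nat.lt_succ_of_le h⟩) else none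
  | .inr q, m => some (q.vert m)

/-- The basic set `U_{v,n} = {[μ] : ∃ η ∈ E^k, s(η) = v, r(η) = μ_{n+k}}`. -/
def Uvn (G : FinGraph) (v : G.V) (n : ℕ) : Set (OmegaQuot G) :=
  {x | ∃ ω : Omega G, Quot.mk (OmegaRel G) ω = x ∧
    ∃ (k : ℕ) (η : GPath G k), GPath.src η = v ∧ vertAt ω (n + k) = some (GPath.rng η)}

namespace OmegaProof

open TopologicalSpace

variable {G : FinGraph}

/-! ### Basic path constructors -/

/-- The trivial path at a vertex. -/
def nil (v : G.V) : GPath G 0 :=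
  ⟨fun _ => v, fun i => i.elim0, fun i => i.elim0, fun i => i.elim0⟩

@[simp] lemma nil_vert (v : G.V) (i : Fin 1) : (nil (G := G) v).vert i = v := rfl
@[simp] lemma nil_src (v : G.V) : (nil (G := G) v).src = v := rfl
@[simp] lemma nil_rng (v : G.V) : (nil (G := G) v).rng = v := rfl

/-- Append an edge at the end of a path. -/
def snoc {k : ℕ} (p : GPath G k) (e : G.E) (h : G.s e = p.rng) : GPath G (k + 1) where
  vert := Fin.snoc p.vert (G.r e)
  edge := Fin.snoc p.edge e
  src_eq := by
    intro i
    refine Fin.lastCases ?_ ?_ i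
    · simp [Fin.snoc_last, Fin.snoc_castSucc, h, GPath.rng]
    · intro j
      simp only [Fin.snoc_castSucc]
      exact p.src_eq j
  rng_eq := by
    intro i
    refine Fin.lastCases ?_ ?_ i
    · simp [Fin.snoc_last, Fin.succ_last]
    · intro j
      simp only [Fin.snoc_castSucc, Fin.succ_castSucc, Fin.snoc_castSucc]
      exact p.rng_eq j

@[simp] lemma snoc_rng {k : ℕ} (p : GPath G k) (e : G.E) (h : G.s e = p.rng) :
    (snoc p e h).rng = G.r e := by
  simp [snoc, GPath.rng, Fin.snoc_last]

@[simp] lemma snoc_src {k : ℕ} (p : GPath G k) (e : G.E) (h : G.s e = p.rng) :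
    (snoc p e h).src = p.src := by
  simp only [snoc, GPath.src]
  rw [show (0 : Fin (k + 2)) = Fin.castSucc 0 from rfl, Fin.snoc_castSucc]

/-- Build a finite path from total vertex data and partial edge data. -/
def mkFin (N : ℕ) (V : ℕ → G.V) (Ed : ∀ i, i < N → G.E)
    (hs : ∀ i (h : i < N), G.s (Ed i h) = V i)
    (hr : ∀ i (h : i < N), G.r (Ed i h) = V (i + 1)) : GPath G N where
  vert := fun i => V i.val
  edge := fun i => Ed i.val i.isLt
  src_eq := fun i => hs i.val i.isLt
  rng_eq := fun i => hr i.val i.isLt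

@[simp] lemma mkFin_vert (N : ℕ) (V : ℕ → G.V) (Ed : ∀ i, i < N → G.E) (hs hr)
    (i : Fin (N + 1)) : (mkFin N V Ed hs hr).vert i = V i.val := rfl
@[simp] lemma mkFin_edge (N : ℕ) (V : ℕ → G.V) (Ed : ∀ i, i < N → G.E) (hs hr)
    (i : Fin N) : (mkFin N V Ed hs hr).edge i = Ed i.val i.isLt := rfl

/-! ### `vertAt` / `edgeAt` interface -/

/-- The `m`-th edge of an element of `Ω_E`, if defined. -/
def edgeAt : Omega G → ℕ → Option G.E
  | .inl ⟨N, p⟩, m => if h : m < N then some (p.1.edge ⟨m, h⟩) else none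
  | .inr q, m => some (q.edge m)

lemma vertAt_inl (N : ℕ) (p : {p : GPath G N // IsSink G p.rng}) (m : ℕ) :
    vertAt (Sum.inl ⟨N, p⟩ : Omega G) m =
      if h : m ≤ N then some (p.1.vert ⟨m, Nat.lt_succ_of_le h⟩) else none := rfl

lemma vertAt_inr (q : InfPath G) (m : ℕ) :
    vertAt (Sum.inr q : Omega G) m = some (q.vert m) := rfl

lemma vertAt_isSome_of_le {ω : Omega G} {m m' : ℕ} (h : m' ≤ m)
    (hm : (vertAt ω m).isSome) : (vertAt ω m').isSome := by
  cases ω with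
  | inl x =>
    obtain ⟨N, p⟩ := x
    rw [vertAt_inl] at hm ⊢
    by_cases hN : m ≤ N
    · rw [dif_pos (le_trans h hN)]; rfl
    · rw [dif_neg hN] at hm; simp at hm
  | inr q => rfl

lemma isSome_iff_exists {α : Type*} {o : Option α} : o.isSome ↔ ∃ a, o = some a := by
  cases o <;> simp


/-! ### Characterization of `ExtendsPath` via `vertAt`/`edgeAt` -/

lemma extends_iff {n : ℕ} (ν : GPath G n) (ω : Omega G) :
    ExtendsPath ν ω ↔
      (∀ i (h : i ≤ n), vertAt ω i = some (ν.vert ⟨i, Nat.lt_succ_of_le h⟩)) ∧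
      (∀ i (h : i < n), edgeAt ω i = some (ν.edge ⟨i, h⟩)) := by
  cases ω with
  | inl x =>
    obtain ⟨N, p⟩ := x
    constructor
    · rintro ⟨hn, hv, he⟩
      refine ⟨fun i h => ?_, fun i h => ?_⟩
      · rw [vertAt_inl, dif_pos (le_trans h hn)]
        exact congrArg some (hv ⟨i, Nat.lt_succ_of_le h⟩)
      · show (if h' : i < N then some (p.1.edge ⟨i, h'⟩) else none) = _
        rw [dif_pos (lt_of_lt_of_le h hn)]
        exact congrArg some (he ⟨i, h⟩)
    · rintro ⟨hv, he⟩
      have hn : n ≤ N := by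
        by_contra hc
        have := hv n le_rfl
        rw [vertAt_inl, dif_neg hc] at this
        cases this
      refine ⟨hn, fun i => ?_, fun i => ?_⟩
      · have := hv i.val (Nat.lt_succ_iff.mp i.isLt)
        rw [vertAt_inl, dif_pos (le_trans (Nat.lt_succ_iff.mp i.isLt) hn)] at this
        have := Option.some.inj this
        rw [show Fin.castLE (Nat.succ_le_succ hn) i = ⟨i.val, by omega⟩ from rfl, this]
      · have := he i.val i.isLt
        rw [show edgeAt (Sum.inl ⟨N, p⟩ : Omega G) i.val
            = (if h' : i.val < N then some (p.1.edge ⟨i.val, h'⟩) else none) from rfl,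
          dif_pos (lt_of_lt_of_le i.isLt hn)] at this
        have := Option.some.inj this
        rw [show Fin.castLE hn i = ⟨i.val, by omega⟩ from rfl, this]
  | inr q =>
    constructor
    · rintro ⟨hv, he⟩
      refine ⟨fun i h => congrArg some (hv ⟨i, Nat.lt_succ_of_le h⟩),
        fun i h => congrArg some (he ⟨i, h⟩)⟩
    · rintro ⟨hv, he⟩
      refine ⟨fun i => ?_, fun i => ?_⟩
      · have := Option.some.inj (hv i.val (Nat.lt_succ_iff.mp i.isLt))
        rw [this]
      · have := Option.some.inj (he i.val i.isLt)
        rw [this]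

lemma extends_vertAt {n : ℕ} {ν : GPath G n} {ω : Omega G} (h : ExtendsPath ν ω) :
    vertAt ω n = some ν.rng := by
  have := ((extends_iff ν ω).mp h).1 n le_rfl
  rw [this]; rfl

/-- The cylinder set of a finite path. -/
def Cyl {n : ℕ} (ν : GPath G n) : Set (Omega G) := {ω | ExtendsPath ν ω}

lemma vertAt_zero_isSome (ω : Omega G) : (vertAt ω 0).isSome := by
  cases ω with
  | inl x => obtain ⟨N, p⟩ := x; rw [vertAt_inl, dif_pos (Nat.zero_le N)]; rfl
  | inr q => rfl

lemma extends_nil {w : G.V} {ω : Omega G} (h : vertAt ω 0 = some w) :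
    ExtendsPath (nil w) ω := by
  rw [extends_iff]
  refine ⟨fun i hi => ?_, fun i hi => by omega⟩
  interval_cases i
  simpa using h

/-- Cylinder sets form a basis of `Ω_E`. -/
lemma basisCyl :
    IsTopologicalBasis {U : Set (Omega G) | ∃ (n : ℕ) (ν : GPath G n), U = Cyl ν} := by
  refine ⟨?_, ?_, rfl⟩
  · rintro t₁ ⟨n, ν, rfl⟩ t₂ ⟨n', ν', rfl⟩ x ⟨hx, hx'⟩
    -- wlog n ≤ n'
    have key : ∀ {m m' : ℕ} (μ : GPath G m) (μ' : GPath G m'), m ≤ m' →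
        ExtendsPath μ x → ExtendsPath μ' x → Cyl μ' ⊆ Cyl μ := by
      intro m m' μ μ' hle h1 h2 ω hω
      simp only [Cyl, Set.mem_setOf_eq] at hω ⊢
      rw [extends_iff] at h1 h2 hω ⊢
      refine ⟨fun i hi => ?_, fun i hi => ?_⟩
      · have e1 := h1.1 i hi
        have e2 := h2.1 i (le_trans hi hle)
        rw [hω.1 i (le_trans hi hle), ← e2, e1]
      · have e1 := h1.2 i hi
        have e2 := h2.2 i (lt_of_lt_of_le hi hle)
        rw [hω.2 i (lt_of_lt_of_le hi hle), ← e2, e1]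
    rcases le_total n n' with hle | hle
    · exact ⟨Cyl ν', ⟨n', ν', rfl⟩, hx', fun ω hω => ⟨key ν ν' hle hx hx' hω, hω⟩⟩
    · exact ⟨Cyl ν, ⟨n, ν, rfl⟩, hx, fun ω hω => ⟨hω, key ν' ν hle hx' hx hω⟩⟩
  · refine Set.eq_univ_of_forall fun ω => ?_
    obtain ⟨w, hw⟩ := isSome_iff_exists.mp (vertAt_zero_isSome ω)
    exact ⟨Cyl (nil w), ⟨0, nil w, rfl⟩, extends_nil hw⟩

/-! ### Truncation -/

/-- The initial segment of length `m` of an element of `Ω_E`. -/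
def take (ω : Omega G) (m : ℕ) (h : (vertAt ω m).isSome) : GPath G m :=
  match ω, h with
  | .inl ⟨N, p⟩, h =>
    have hm : m ≤ N := by
      by_contra hc
      rw [vertAt_inl, dif_neg hc] at h
      exact Bool.noConfusion h
    mkFin m (fun i => p.1.vert ⟨min i N, by omega⟩)
      (fun i hi => p.1.edge ⟨i, by omega⟩)
      (fun i hi => by
        rw [p.1.src_eq ⟨i, by omega⟩]
        congr 1
        exact Fin.ext (by simp [Fin.castSucc]; omega))
      (fun i hi => by
        rw [p.1.rng_eq ⟨i, by omega⟩]
        congr 1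
        exact Fin.ext (by simp; omega))
  | .inr q, _ =>
    mkFin m (fun i => q.vert i) (fun i _ => q.edge i)
      (fun i _ => q.src_eq i) (fun i _ => q.rng_eq i)

lemma take_extends (ω : Omega G) (m : ℕ) (h : (vertAt ω m).isSome) :
    ExtendsPath (take ω m h) ω := by
  rw [extends_iff]
  cases ω with
  | inl x =>
    obtain ⟨N, p⟩ := x
    have hm : m ≤ N := by
      by_contra hc
      rw [vertAt_inl, dif_neg hc] at h
      exact Bool.noConfusion h
    constructor
    · intro i hi
      rw [vertAt_inl, dif_pos (le_trans hi hm)]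
      show _ = some (p.1.vert ⟨min i N, _⟩)
      congr 1; congr 1
      exact Fin.ext (by simp; omega)
    · intro i hi
      show (if h' : i < N then some (p.1.edge ⟨i, h'⟩) else none) = _
      rw [dif_pos (by omega : i < N)]
      rfl
  | inr q => exact ⟨fun i hi => rfl, fun i hi => rfl⟩

lemma take_rng (ω : Omega G) (m : ℕ) (h : (vertAt ω m).isSome) :
    vertAt ω m = some (take ω m h).rng :=
  extends_vertAt (take_extends ω m h)

/-! ### Reachability -/

/-- `w` is reachable from `v` by a path of length `k`. -/
def Reach (v : G.V) (k : ℕ) (w : G.V) : Prop :=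
  ∃ η : GPath G k, η.src = v ∧ η.rng = w

lemma reach_zero (v : G.V) : Reach (G := G) v 0 v := ⟨nil v, rfl, rfl⟩

lemma reach_succ {v w : G.V} {k : ℕ} (h : Reach v k w) (e : G.E) (he : G.s e = w) :
    Reach v (k + 1) (G.r e) := by
  obtain ⟨η, h1, h2⟩ := h
  exact ⟨snoc η e (h2 ▸ he), by simp [h1], by simp⟩

/-- Extract the connecting edge between two consecutive defined vertices. -/
lemma step_edge {ω : Omega G} {m : ℕ} {w w' : G.V}
    (h : vertAt ω m = some w) (h' : vertAt ω (m + 1) = some w') :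
    ∃ e : G.E, G.s e = w ∧ G.r e = w' := by
  cases ω with
  | inl x =>
    obtain ⟨N, p⟩ := x
    have hm : m + 1 ≤ N := by
      by_contra hc
      rw [vertAt_inl, dif_neg hc] at h'
      cases h'
    rw [vertAt_inl, dif_pos (by omega : m ≤ N)] at h
    rw [vertAt_inl, dif_pos hm] at h'
    refine ⟨p.1.edge ⟨m, by omega⟩, ?_, ?_⟩
    · rw [p.1.src_eq ⟨m, by omega⟩, ← Option.some.inj h]
      congr 1
    · rw [p.1.rng_eq ⟨m, by omega⟩, ← Option.some.inj h']
      congr 1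
  | inr q =>
    refine ⟨q.edge m, ?_, ?_⟩
    · rw [q.src_eq m, ← Option.some.inj h]
    · rw [q.rng_eq m, ← Option.some.inj h']

/-- Reachability propagates to any larger defined level. -/
lemma reach_mono {v : G.V} {n k : ℕ} {w : G.V} {ω : Omega G}
    (hr : Reach v k w) (h : vertAt ω (n + k) = some w) :
    ∀ k', k ≤ k' → ∀ w', vertAt ω (n + k') = some w' → Reach v k' w' := by
  intro k' hk
  induction k' , hk using Nat.le_induction with
  | base => intro w' hw'; rw [h] at hw'; exact Option.some.inj hw' ▸ hr
  | succ k' hk ih =>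
    intro w' hw'
    have hsome : (vertAt ω (n + k')).isSome :=
      vertAt_isSome_of_le (Nat.le_succ (n + k')) (by show (vertAt ω (n + (k' + 1))).isSome = true; rw [hw']; rfl)
    obtain ⟨w'', hw''⟩ := isSome_iff_exists.mp hsome
    obtain ⟨e, he1, he2⟩ := step_edge hw'' hw' 
    exact he2 ▸ reach_succ (ih w'' hw'') e he1

/-- The saturated open set underlying `U_{v,n}`. -/
def W (v : G.V) (n : ℕ) : Set (Omega G) :=
  {ω | ∃ (k : ℕ) (w : G.V), Reach v k w ∧ vertAt ω (n + k) = some w}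

lemma mem_W_iff (v : G.V) (n : ℕ) (ω : Omega G) :
    ω ∈ W v n ↔ ∃ (k : ℕ) (η : GPath G k), η.src = v ∧ vertAt ω (n + k) = some η.rng := by
  constructor
  · rintro ⟨k, w, ⟨η, h1, h2⟩, h⟩; exact ⟨k, η, h1, h2 ▸ h⟩
  · rintro ⟨k, η, h1, h⟩; exact ⟨k, η.rng, ⟨η, h1, rfl⟩, h⟩

lemma W_isOpen (v : G.V) (n : ℕ) : IsOpen (W (G := G) v n) := by
  refine basisCyl.isOpen_iff.mpr ?_
  rintro ω ⟨k, w, hr, hvert⟩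
  have hsome : (vertAt ω (n + k)).isSome := by rw [hvert]; rfl
  refine ⟨Cyl (take ω (n + k) hsome), ⟨n + k, _, rfl⟩, take_extends ω (n + k) hsome, ?_⟩
  intro ω' hω'
  have h1 : vertAt ω' (n + k) = some (take ω (n + k) hsome).rng := extends_vertAt hω'
  have h2 : (take ω (n + k) hsome).rng = w := by
    have := take_rng ω (n + k) hsome
    rw [hvert] at this
    exact (Option.some.inj this).symm
  exact ⟨k, w, hr, h2 ▸ h1⟩

/-! ### The relation is an equivalence; `W` is saturated -/

lemma omegaRel_equiv : Equivalence (OmegaRel G) := by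
  constructor
  · rintro (⟨N, p⟩ | q)
    · exact ⟨rfl, rfl⟩
    · exact ⟨0, fun k _ => rfl⟩
  · rintro (⟨N, p⟩ | q) (⟨M, p'⟩ | q') h
    · exact ⟨h.1.symm, h.2.symm⟩
    · exact h.elim
    · exact h.elim
    · obtain ⟨N0, hN0⟩ := h; exact ⟨N0, fun k hk => (hN0 k hk).symm⟩
  · rintro (⟨N, p⟩ | q) (⟨M, p'⟩ | q') (⟨M', p''⟩ | q'') h h'
    · exact ⟨h.1.trans h'.1, h.2.trans h'.2⟩
    · exact h'.elim
    · exact h.elim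
    · exact h.elim
    · exact h.elim
    · exact h.elim
    · exact h'.elim
    · obtain ⟨N1, h1⟩ := h
      obtain ⟨N2, h2⟩ := h'
      exact ⟨max N1 N2, fun k hk =>
        (h1 k (le_trans (le_max_left _ _) hk)).trans (h2 k (le_trans (le_max_right _ _) hk))⟩

lemma quot_mk_eq_iff (ω ω' : Omega G) :
    Quot.mk (OmegaRel G) ω = Quot.mk (OmegaRel G) ω' ↔ OmegaRel G ω ω' := by
  rw [Quot.eq]
  exact (Equivalence.eqvGen_iff omegaRel_equiv)

lemma vertAt_last_fin (N : ℕ) (p : {p : GPath G N // IsSink G p.rng}) :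
    vertAt (Sum.inl ⟨N, p⟩ : Omega G) N = some p.1.rng := by
  rw [vertAt_inl, dif_pos le_rfl]
  rfl

lemma W_saturated {v : G.V} {n : ℕ} {ω ω' : Omega G}
    (hrel : OmegaRel G ω ω') (hω : ω ∈ W v n) : ω' ∈ W v n := by
  obtain ⟨k, w, hr, hvert⟩ := hω
  cases ω with
  | inl x =>
    obtain ⟨N, p⟩ := x
    cases ω' with
    | inl x' =>
      obtain ⟨M, p'⟩ := x'
      obtain ⟨hNM, hrng⟩ := hrel
      have hk : n + k ≤ N := by
        by_contra hc
        rw [vertAt_inl, dif_neg hc] at hvert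
        cases hvert
      have hreach : Reach v (N - n) p.1.rng := by
        refine reach_mono hr hvert (N - n) (by omega) p.1.rng ?_
        rw [show n + (N - n) = N by omega]
        exact vertAt_last_fin N p
      refine ⟨N - n, p'.1.rng, hrng ▸ hreach, ?_⟩
      rw [show n + (N - n) = M by omega]
      exact vertAt_last_fin M p'
    | inr q' => exact hrel.elim
  | inr q =>
    cases ω' with
    | inl x' => exact hrel.elim
    | inr q' =>
      obtain ⟨N0, hN0⟩ := hrel
      set k' := max k (N0 + 1) with hk'
      obtain ⟨w', hw'⟩ := isSome_iff_exists.mp (by rfl : (vertAt (Sum.inr q : Omega G) (n + k')).isSome)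
      have hreach : Reach v k' w' := reach_mono hr hvert k' (le_max_left _ _) w' hw'
      refine ⟨k', w', hreach, ?_⟩
      rw [vertAt_inr]
      rw [vertAt_inr] at hw'
      have hvq : q.vert (n + k') = q'.vert (n + k') := by
        have h1 := q.rng_eq (n + k' - 1)
        have h2 := q'.rng_eq (n + k' - 1)
        have he : q.edge (n + k' - 1) = q'.edge (n + k' - 1) := hN0 _ (by omega)
        rw [show n + k' - 1 + 1 = n + k' by omega] at h1 h2
        rw [← h1, ← h2, he]
      rw [← hvq]
      exact hw'

/-! ### Splicing paths -/

lemma vert_congr {m : ℕ} (p : GPath G m) {i j : Fin (m + 1)} (h : i.val = j.val) :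
    p.vert i = p.vert j := by congr 1; exact Fin.ext h

section Splice

variable {n k : ℕ} (ν : GPath G n) (η : GPath G k)

/-- Spliced vertex function: `ν` on `[0,n]`, `η` on `[n,n+k]`, tail `tV` beyond. -/
def spV (tV : ℕ → G.V) (m : ℕ) : G.V :=
  if h1 : m ≤ n then ν.vert ⟨m, by omega⟩
  else if h2 : m ≤ n + k then η.vert ⟨m - n, by omega⟩
  else tV m

variable (tV : ℕ → G.V)

lemma spV_le {m : ℕ} (h : m ≤ n) : spV ν η tV m = ν.vert ⟨m, by omega⟩ := dif_pos h

lemma spV_mid (hσ : η.src = ν.rng) {m : ℕ} (h1 : n ≤ m) (h2 : m ≤ n + k) :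
    spV ν η tV m = η.vert ⟨m - n, by omega⟩ := by
  unfold spV
  by_cases h : m ≤ n
  · have hm : m = n := le_antisymm h h1
    subst hm
    rw [dif_pos h]
    rw [show ν.vert ⟨m, by omega⟩ = ν.rng from vert_congr ν rfl, ← hσ]
    exact (vert_congr η (by simp [GPath.src])).symm
  · rw [dif_neg h, dif_pos h2]

lemma spV_ge (hσ : η.src = ν.rng) (hτ : tV (n + k) = η.rng) {m : ℕ} (h : n + k ≤ m) :
    spV ν η tV m = tV m := by
  rcases eq_or_lt_of_le h with heq | hlt
  · subst heq
    rw [spV_mid ν η tV hσ (by omega) le_rfl, hτ]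
    exact vert_congr η (by simp [GPath.rng, Fin.last])
  · unfold spV
    rw [dif_neg (by omega), dif_neg (by omega)]

end Splice

/-- The key surgery lemma: if `ω` has a vertex at level `n + k` reachable from `r(ν)`
by `η`, then `ω` is tail-equivalent to an element of the cylinder of `ν`. -/
lemma exists_rel_extends {n k : ℕ} (ν : GPath G n) (η : GPath G k)
    (hσ : η.src = ν.rng) (ω : Omega G) (hvert : vertAt ω (n + k) = some η.rng) :
    ∃ ω' : Omega G, OmegaRel G ω ω' ∧ ExtendsPath ν ω' := by
  cases ω with
  | inr q =>
    have hτ : q.vert (n + k) = η.rng := Option.some.inj hvert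
    obtain ⟨Ed, hEd⟩ : ∃ Ed : ℕ → G.E, ∀ m, Ed m =
        if h1 : m < n then ν.edge ⟨m, h1⟩
        else if h2 : m < n + k then η.edge ⟨m - n, by omega⟩
        else q.edge m := ⟨_, fun m => rfl⟩
    have hs : ∀ m, G.s (Ed m) = spV ν η q.vert m := by
      intro m
      rw [hEd m]
      by_cases h1 : m < n
      · rw [dif_pos h1, ν.src_eq ⟨m, h1⟩, spV_le ν η q.vert (le_of_lt h1)]
        exact vert_congr ν rfl
      · by_cases h2 : m < n + k
        · rw [dif_neg h1, dif_pos h2, η.src_eq ⟨m - n, by omega⟩,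
            spV_mid ν η q.vert hσ (by omega) (le_of_lt h2)]
          exact vert_congr η rfl
        · rw [dif_neg h1, dif_neg h2, q.src_eq m, spV_ge ν η q.vert hσ hτ (by omega)]
    have hr : ∀ m, G.r (Ed m) = spV ν η q.vert (m + 1) := by
      intro m
      rw [hEd m]
      by_cases h1 : m < n
      · rw [dif_pos h1, ν.rng_eq ⟨m, h1⟩, spV_le ν η q.vert (by omega)]
        exact vert_congr ν rfl
      · by_cases h2 : m < n + k
        · rw [dif_neg h1, dif_pos h2, η.rng_eq ⟨m - n, by omega⟩,
            spV_mid ν η q.vert hσ (by omega) (by omega)]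
          exact vert_congr η (by simp; omega)
        · rw [dif_neg h1, dif_neg h2, q.rng_eq m, spV_ge ν η q.vert hσ hτ (by omega)]
    refine ⟨Sum.inr ⟨spV ν η q.vert, Ed, hs, hr⟩, ?_, ?_⟩
    · exact ⟨n + k, fun m hm => by
        show q.edge m = Ed m
        rw [hEd m, dif_neg (show ¬ m < n by omega), dif_neg (show ¬ m < n + k by omega)]⟩
    · refine (extends_iff _ _).mpr ?_
      refine ⟨fun i hi => congrArg some (spV_le ν η q.vert hi), fun i hi => ?_⟩
      show some (Ed i) = _
      rw [hEd i, dif_pos hi]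
  | inl x =>
    obtain ⟨N, p⟩ := x
    have hNk : n + k ≤ N := by
      by_contra hc
      rw [vertAt_inl, dif_neg hc] at hvert
      cases hvert
    obtain ⟨tV, htV⟩ : ∃ tV : ℕ → G.V, ∀ m, tV m = p.1.vert ⟨min m N, Nat.lt_succ_of_le (Nat.min_le_right m N)⟩ :=
      ⟨_, fun m => rfl⟩
    have htail : ∀ m, ∀ h : m ≤ N, tV m = p.1.vert ⟨m, Nat.lt_succ_of_le h⟩ := by
      intro m h
      rw [htV m]
      exact vert_congr p.1 (by simp; omega)
    have hτ : tV (n + k) = η.rng := by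
      rw [vertAt_inl, dif_pos hNk] at hvert
      rw [htail (n + k) hNk, ← Option.some.inj hvert]
    obtain ⟨Ed, hEd⟩ : ∃ Ed : ∀ i, i < N → G.E, ∀ i (hi : i < N), Ed i hi =
        if h1 : i < n then ν.edge ⟨i, h1⟩
        else if h2 : i < n + k then η.edge ⟨i - n, by omega⟩
        else p.1.edge ⟨i, hi⟩ := ⟨_, fun i hi => rfl⟩
    have hs : ∀ i (hi : i < N), G.s (Ed i hi) = spV ν η tV i := by
      intro i hi
      rw [hEd i hi]
      by_cases h1 : i < n
      · rw [dif_pos h1, ν.src_eq ⟨i, h1⟩, spV_le ν η tV (le_of_lt h1)]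
        exact vert_congr ν rfl
      · by_cases h2 : i < n + k
        · rw [dif_neg h1, dif_pos h2, η.src_eq ⟨i - n, by omega⟩,
            spV_mid ν η tV hσ (by omega) (le_of_lt h2)]
          exact vert_congr η rfl
        · rw [dif_neg h1, dif_neg h2, p.1.src_eq ⟨i, hi⟩,
            spV_ge ν η tV hσ hτ (by omega), htail i (le_of_lt hi)]
          exact vert_congr p.1 rfl
    have hr : ∀ i (hi : i < N), G.r (Ed i hi) = spV ν η tV (i + 1) := by
      intro i hi
      rw [hEd i hi]
      by_cases h1 : i < n
      · rw [dif_pos h1, ν.rng_eq ⟨i, h1⟩, spV_le ν η tV (by omega)]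
        exact vert_congr ν rfl
      · by_cases h2 : i < n + k
        · rw [dif_neg h1, dif_pos h2, η.rng_eq ⟨i - n, by omega⟩,
            spV_mid ν η tV hσ (by omega) (by omega)]
          exact vert_congr η (by simp; omega)
        · rw [dif_neg h1, dif_neg h2, p.1.rng_eq ⟨i, hi⟩,
            spV_ge ν η tV hσ hτ (by omega), htail (i + 1) (by omega)]
          exact vert_congr p.1 rfl
    have hrng : (mkFin N (spV ν η tV) Ed hs hr).rng = p.1.rng := by
      show spV ν η tV N = _
      rw [spV_ge ν η tV hσ hτ hNk, htail N le_rfl]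
      exact vert_congr p.1 rfl
    refine ⟨Sum.inl ⟨N, ⟨mkFin N (spV ν η tV) Ed hs hr, by rw [hrng]; exact p.2⟩⟩,
      ⟨rfl, hrng.symm⟩, ?_⟩
    refine (extends_iff _ _).mpr ?_
    constructor
    · intro i hi
      rw [vertAt_inl, dif_pos (by omega : i ≤ N)]
      exact congrArg some (spV_le ν η tV hi)
    · intro i hi
      show (if h' : i < N then some ((mkFin N (spV ν η tV) Ed hs hr).edge ⟨i, h'⟩)
          else none) = _
      rw [dif_pos (by omega : i < N)]
      rw [show (mkFin N (spV ν η tV) Ed hs hr).edge ⟨i, by omega⟩ = Ed i (by omega) from rfl,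
        hEd i (by omega), dif_pos hi]

/-! ### `q(U_ν) = U_{r(ν),n}` and the main theorem -/

lemma image_cyl {n : ℕ} (ν : GPath G n) :
    Quot.mk (OmegaRel G) '' Cyl ν = Uvn G ν.rng n := by
  apply Set.Subset.antisymm
  · rintro x ⟨ω, hω, rfl⟩
    refine ⟨ω, rfl, 0, nil ν.rng, nil_src _, ?_⟩
    rw [Nat.add_zero, nil_rng]
    exact extends_vertAt hω
  · rintro x ⟨ω, rfl, k, η, hsrc, hvert⟩
    obtain ⟨ω', hrel, hext⟩ := exists_rel_extends ν η hsrc ω hvert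
    exact ⟨ω', hext, (Quot.sound hrel).symm⟩

lemma preimage_Uvn (v : G.V) (n : ℕ) :
    Quot.mk (OmegaRel G) ⁻¹' Uvn G v n = W v n := by
  ext ω'
  constructor
  · rintro ⟨ω, hq, k, η, hsrc, hvert⟩
    have hrel : OmegaRel G ω ω' := (quot_mk_eq_iff ω ω').mp hq
    exact W_saturated hrel ((mem_W_iff v n ω).mpr ⟨k, η, hsrc, hvert⟩)
  · intro h
    obtain ⟨k, η, hsrc, hvert⟩ := (mem_W_iff v n ω').mp h
    exact ⟨ω', rfl, k, η, hsrc, hvert⟩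

lemma Uvn_isOpen (v : G.V) (n : ℕ) : IsOpen (Uvn G v n) := by
  rw [show IsOpen (Uvn G v n) ↔ IsOpen (Quot.mk (OmegaRel G) ⁻¹' Uvn G v n) from isOpen_coinduced, preimage_Uvn]
  exact W_isOpen v n

end OmegaProof

theorem omegaQuot_isOpenMap_and_basis (G : FinGraph) :
    IsOpenMap (Quot.mk (OmegaRel G)) ∧
    TopologicalSpace.IsTopologicalBasis
      {U : Set (OmegaQuot G) | ∃ (v : G.V) (n : ℕ), U = Uvn G v n} := by
  open OmegaProof in
  constructor
  · intro U hU
    obtain ⟨S, hS, rfl⟩ := basisCyl.open_eq_sUnion hU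
    rw [Set.sUnion_eq_biUnion, Set.image_iUnion₂]
    refine isOpen_biUnion fun b hb => ?_
    obtain ⟨n, ν, rfl⟩ := hS hb
    rw [image_cyl]
    exact Uvn_isOpen ν.rng n
  · refine TopologicalSpace.isTopologicalBasis_of_isOpen_of_nhds ?_ ?_
    · rintro U ⟨v, n, rfl⟩
      exact Uvn_isOpen v n
    · intro x U hxU hU
      obtain ⟨ω, rfl⟩ := Quot.exists_rep x
      have hpre : IsOpen (Quot.mk (OmegaRel G) ⁻¹' U) := hU
      obtain ⟨b, ⟨n, ν, rfl⟩, hωb, hbU⟩ :=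
        basisCyl.exists_subset_of_mem_open (show ω ∈ _ from hxU) hpre
      refine ⟨Uvn G ν.rng n, ⟨ν.rng, n, rfl⟩, ?_, ?_⟩
      · rw [← image_cyl]
        exact ⟨ω, hωb, rfl⟩
      · rw [← image_cyl]
        rintro y ⟨ω0, hω0, rfl⟩
        exact hbU hω0
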